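/- Let k be a field and A a finite-dimensional symmetric k-algebra. Let X --f--> M' --g--> Y → X⟦1⟧ be a distinguished triangle in K^b(proj A) and let M be an object of K^b(proj A). If for every i ∈ ℤ every morphism X → M⟦i⟧ in K^b(proj A) factors through f, then for every i ∈ ℤ every morphism M⟦i⟧ → Y in K^b(proj A) factors through g. -/

import Mathlib

open CategoryTheory Category Limits

set_option linter.unusedSectionVars false

namespace ForPaper

section LocalizationLinear

variable {C D : Type*} [Category C] [Category D] (L : C ⥤ D) (W : MorphismProperty C)
  [L.IsLocalization W] [Preadditive C] [Preadditive D] [L.Additive]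
  (R : Type*) [CommSemiring R] [CategoryTheory.Linear R C]

/-- The "multiplication by a scalar" natural endomorphism of the identity functor of
a localized category. -/
noncomputable def eta (a : R) : 𝟭 D ⟶ 𝟭 D :=
  Localization.liftNatTrans L W L L (𝟭 D) (𝟭 D)
    { app := fun X => L.map (a • 𝟙 X)
      naturality := fun X Y f => by
        rw [← L.map_comp, ← L.map_comp, Linear.smul_comp, Linear.comp_smul, id_comp, comp_id] }

lemma eta_app (a : R) (X : C) : (eta L W R a).app (L.obj X) = L.map (a • 𝟙 X) := by
  simp [eta, Localization.liftNatTrans_app]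

lemma eta_one : eta L W R 1 = 𝟙 (𝟭 D) :=
  Localization.natTrans_ext L W (fun X => by simp [eta_app])

lemma eta_mul (a b : R) : eta L W R (a * b) = eta L W R a ≫ eta L W R b :=
  Localization.natTrans_ext L W (fun X => by
    simp only [eta_app, NatTrans.comp_app, Functor.id_obj, eta_app, ← L.map_comp,
      Linear.smul_comp, Linear.comp_smul, id_comp, smul_smul, mul_comm a b])

lemma eta_add (a b : R) : eta L W R (a + b) = eta L W R a + eta L W R b :=
  Localization.natTrans_ext L W (fun X => by
    rw [eta_app, NatTrans.app_add, eta_app, eta_app, ← Functor.map_add, add_smul])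

lemma eta_zero : eta L W R 0 = 0 :=
  Localization.natTrans_ext L W (fun X => by
    simp [eta_app])

lemma eta_naturality (a : R) {P Q : D} (f : P ⟶ Q) :
    (eta L W R a).app P ≫ f = f ≫ (eta L W R a).app Q := by
  simpa using ((eta L W R a).naturality f).symm

/-- The `R`-linear structure on a category obtained by localization of an `R`-linear
category; it is characterized by the fact that the localization functor is `R`-linear. -/
noncomputable def localizationLinear : CategoryTheory.Linear R D where
  homModule P Q :=
    { smul := fun a f => (eta L W R a).app P ≫ f
      one_smul := fun f => by
        show (eta L W R 1).app P ≫ f = f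
        rw [eta_one]; simp
      mul_smul := fun a b f => by
        show (eta L W R (a * b)).app P ≫ f = (eta L W R a).app P ≫ ((eta L W R b).app P ≫ f)
        rw [eta_mul]; simp
      smul_zero := fun a => comp_zero
      smul_add := fun a f g => Preadditive.comp_add _ _ _ _ _ _
      add_smul := fun a b f => by
        show (eta L W R (a + b)).app P ≫ f =
          (eta L W R a).app P ≫ f + (eta L W R b).app P ≫ f
        rw [eta_add]; simp [Preadditive.add_comp]
      zero_smul := fun f => by
        show (eta L W R 0).app P ≫ f = 0
        rw [eta_zero]; simp }
  smul_comp P Q T a f g := by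
    show ((eta L W R a).app P ≫ f) ≫ g = (eta L W R a).app P ≫ (f ≫ g)
    rw [assoc]
  comp_smul P Q T f a g := by
    show f ≫ ((eta L W R a).app Q ≫ g) = (eta L W R a).app P ≫ (f ≫ g)
    rw [← assoc, ← eta_naturality, assoc]

end LocalizationLinear

universe u v

/-- Two `k`-algebras are *derived equivalent* if there is a `k`-linear equivalence
between the (unbounded) derived categories of their module categories which commutes
with the shift functors and preserves distinguished triangles. -/
def DerivedEquivalent (k : Type*) [Field k] (Λ : Type u) [Ring Λ] [Algebra k Λ]
    (Γ : Type v) [Ring Γ] [Algebra k Γ] : Prop :=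
  letI : HasDerivedCategory (ModuleCat.{u} Λ) := HasDerivedCategory.standard _
  letI : HasDerivedCategory (ModuleCat.{v} Γ) := HasDerivedCategory.standard _
  letI : CategoryTheory.Linear k (DerivedCategory (ModuleCat.{u} Λ)) :=
    ForPaper.localizationLinear DerivedCategory.Qh
      (HomotopyCategory.subcategoryAcyclic (ModuleCat.{u} Λ)).trW k
  letI : CategoryTheory.Linear k (DerivedCategory (ModuleCat.{v} Γ)) :=
    ForPaper.localizationLinear DerivedCategory.Qh
      (HomotopyCategory.subcategoryAcyclic (ModuleCat.{v} Γ)).trW k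
  ∃ (F : DerivedCategory (ModuleCat.{u} Λ) ⥤ DerivedCategory (ModuleCat.{v} Γ))
    (c : F.CommShift ℤ) (a : F.Additive),
      F.IsEquivalence ∧ (letI := c; F.IsTriangulated) ∧ (letI := a; F.Linear k)

/-- A bounded complex of finitely generated projective modules. -/
def IsPerfect {A : Type u} [Ring A] (X : CochainComplex (ModuleCat.{u} A) ℤ) : Prop :=
  (∀ n : ℤ, Module.Finite A (X.X n) ∧ Module.Projective A (X.X n)) ∧
  (∃ a b : ℤ, ∀ n : ℤ, (n < a ∨ b < n) → IsZero (X.X n))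

/-- A finite-dimensional algebra is *symmetric* if it admits a linear form `lam` such that
`lam (a * b) = lam (b * a)` for all `a`, `b`, and such that the associated trace bilinear
form `(a, b) ↦ lam (a * b)` is nondegenerate. -/
def IsSymmetricAlgebra (k : Type*) [Field k] (A : Type*) [Ring A] [Algebra k A] : Prop :=
  ∃ lam : A →ₗ[k] k, (∀ a b : A, lam (a * b) = lam (b * a)) ∧
    (∀ a : A, (∀ b : A, lam (a * b) = 0) → a = 0)

end ForPaper



namespace Statement11Aux

universe u

variable {k : Type u} [Field k] {A : Type u} [Ring A] [Algebra k A]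

section ModLevel

variable (lam : A →ₗ[k] k)

/-- trace against lam of an endomorphism of a free module -/
def Tlam {n : ℕ} (u : (Fin n → A) →ₗ[A] (Fin n → A)) : k :=
  ∑ j, lam (u (Pi.single j 1) j)

lemma Tlam_add {n : ℕ} (u v : (Fin n → A) →ₗ[A] (Fin n → A)) :
    Tlam lam (u + v) = Tlam lam u + Tlam lam v := by
  simp [Tlam, Finset.sum_add_distrib]

lemma Tlam_zero {n : ℕ} : Tlam lam (0 : (Fin n → A) →ₗ[A] (Fin n → A)) = 0 := by
  simp [Tlam]

lemma Tlam_smul {n : ℕ} (c : k) (u : (Fin n → A) →ₗ[A] (Fin n → A)) :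
    Tlam lam (c • u) = c • Tlam lam u := by
  unfold Tlam
  rw [Finset.smul_sum]
  exact Finset.sum_congr rfl fun j _ => by
    rw [LinearMap.smul_apply, Pi.smul_apply, map_smul]

lemma Tlam_cyclic (hlam : ∀ a b : A, lam (a * b) = lam (b * a)) {n m : ℕ}
    (u : (Fin n → A) →ₗ[A] (Fin m → A)) (v : (Fin m → A) →ₗ[A] (Fin n → A)) :
    Tlam lam (v.comp u) = Tlam lam (u.comp v) := by
  have expand : ∀ {a b : ℕ} (w : (Fin a → A) →ₗ[A] (Fin b → A)) (x : Fin a → A) (i : Fin b),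
      w x i = ∑ j, x j * w (Pi.single j 1) i := by
    intro a b w x i
    have hx : x = ∑ j, x j • (Pi.single j 1 : Fin a → A) := by
      funext i'
      simp [Finset.sum_apply, Pi.single_apply, smul_eq_mul]
    conv_lhs => rw [hx]
    rw [map_sum]
    simp only [Finset.sum_apply, LinearMap.map_smul, Pi.smul_apply, smul_eq_mul]
  have key : ∀ {a b : ℕ} (w : (Fin a → A) →ₗ[A] (Fin b → A))
      (w' : (Fin b → A) →ₗ[A] (Fin a → A)),
      Tlam lam (w'.comp w) = ∑ j, ∑ i, lam (w (Pi.single j 1) i * w' (Pi.single i 1) j) := by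
    intro a b w w'
    unfold Tlam
    refine Finset.sum_congr rfl (fun j _ => ?_)
    rw [LinearMap.comp_apply, expand w' (w (Pi.single j 1)) j, map_sum]
  rw [key u v, key v u, Finset.sum_comm]
  exact Finset.sum_congr rfl fun i _ => Finset.sum_congr rfl fun j _ => hlam _ _


/-- A chosen finite free splitting of a module. -/
structure Split (M : ModuleCat.{u} A) where
  nn : ℕ
  i : M →ₗ[A] (Fin nn → A)
  p : (Fin nn → A) →ₗ[A] M
  hpi : p.comp i = LinearMap.id

lemma Split.pi_apply {M : ModuleCat.{u} A} (s : Split M) (x : M) : s.p (s.i x) = x :=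
  congrArg (fun f => f x) s.hpi

noncomputable def splitOf (M : ModuleCat.{u} A) (h1 : Module.Finite A M)
    (h2 : Module.Projective A M) : Split (A := A) M :=
  letI := h1
  letI := h2
  let e := Module.Finite.exists_fin' A M
  let n := e.choose
  let f := e.choose_spec.choose
  let hf := e.choose_spec.choose_spec
  let e2 := Module.projective_lifting_property f LinearMap.id hf
  ⟨n, e2.choose, f, e2.choose_spec⟩

variable (lam : A →ₗ[k] k)

section Pairing

/-- the lam-trace pairing of maps between modules with chosen splittings -/
def tp {M N : ModuleCat.{u} A} (sM : Split M) (a : M ⟶ N) (b : N ⟶ M) : k :=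
  Tlam lam ((sM.i.comp (b.hom.comp (a.hom.comp sM.p))))

lemma tp_add_left {M N : ModuleCat.{u} A} (sM : Split M) (a a' : M ⟶ N) (b : N ⟶ M) :
    tp lam sM (a + a') b = tp lam sM a b + tp lam sM a' b := by
  unfold tp
  rw [← Tlam_add]
  congr 1
  apply LinearMap.ext; intro x
  show sM.i (b ((a + a') (sM.p x))) = sM.i (b (a (sM.p x))) + sM.i (b (a' (sM.p x)))
  rw [show (a + a') (sM.p x) = a (sM.p x) + a' (sM.p x) from rfl, map_add, map_add]

lemma tp_add_right {M N : ModuleCat.{u} A} (sM : Split M) (a : M ⟶ N) (b b' : N ⟶ M) :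
    tp lam sM a (b + b') = tp lam sM a b + tp lam sM a b' := by
  unfold tp
  rw [← Tlam_add]
  congr 1
  apply LinearMap.ext; intro x
  show sM.i ((b + b') (a (sM.p x))) = sM.i (b (a (sM.p x))) + sM.i (b' (a (sM.p x)))
  rw [show (b + b') (a (sM.p x)) = b (a (sM.p x)) + b' (a (sM.p x)) from rfl, map_add]

lemma tp_zero_left {M N : ModuleCat.{u} A} (sM : Split M) (b : N ⟶ M) :
    tp lam sM (0 : M ⟶ N) b = 0 := by
  unfold tp
  rw [← Tlam_zero (lam := lam) (n := sM.nn)]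
  congr 1
  apply LinearMap.ext; intro x
  show sM.i (b ((0 : M ⟶ N) (sM.p x))) = 0
  show sM.i (b ((0 : M →ₗ[A] N) (sM.p x))) = 0
  rw [LinearMap.zero_apply, map_zero, map_zero]

lemma tp_zero_right {M N : ModuleCat.{u} A} (sM : Split M) (a : M ⟶ N) :
    tp lam sM a (0 : N ⟶ M) = 0 := by
  unfold tp
  rw [← Tlam_zero (lam := lam) (n := sM.nn)]
  congr 1
  apply LinearMap.ext; intro x
  show sM.i ((0 : N →ₗ[A] M) (a (sM.p x))) = 0
  rw [LinearMap.zero_apply, map_zero]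

lemma tp_smul_left {M N : ModuleCat.{u} A} (sM : Split M) (c : k) (a : M ⟶ N) (b : N ⟶ M) :
    tp lam sM (c • a) b = c • tp lam sM a b := by
  unfold tp
  rw [← Tlam_smul]
  congr 1
  apply LinearMap.ext; intro x
  show sM.i (b ((c • a) (sM.p x))) = c • (sM.i (b (a (sM.p x))))
  have : (c • a) (sM.p x) = algebraMap k A c • a (sM.p x) := rfl
  rw [this, map_smul, map_smul, algebraMap_smul]

lemma tp_smul_right {M N : ModuleCat.{u} A} (sM : Split M) (c : k) (a : M ⟶ N) (b : N ⟶ M) :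
    tp lam sM a (c • b) = c • tp lam sM a b := by
  unfold tp
  rw [← Tlam_smul]
  congr 1
  apply LinearMap.ext; intro x
  show sM.i ((c • b) (a (sM.p x))) = c • (sM.i (b (a (sM.p x))))
  have : (c • b) (a (sM.p x)) = algebraMap k A c • b (a (sM.p x)) := rfl
  rw [this, map_smul, algebraMap_smul]

/-- associativity: moving a middle map across the pairing -/
lemma tp_assoc {M N P : ModuleCat.{u} A} (sM : Split M) (a : M ⟶ N) (c : N ⟶ P) (b : P ⟶ M) :
    tp lam sM (a ≫ c) b = tp lam sM a (c ≫ b) := rfl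

lemma tp_cyclic (hlam : ∀ a b : A, lam (a * b) = lam (b * a))
    {M N : ModuleCat.{u} A} (sM : Split M) (sN : Split N) (a : M ⟶ N) (b : N ⟶ M) :
    tp lam sM a b = tp lam sN b a := by
  unfold tp
  have h1 : sM.i.comp (b.hom.comp (a.hom.comp sM.p)) =
      (sM.i.comp (b.hom.comp sN.p)).comp
        (sN.i.comp (a.hom.comp sM.p)) := by
    apply LinearMap.ext; intro x
    show sM.i (b (a (sM.p x))) = sM.i (b (sN.p (sN.i (a (sM.p x)))))
    rw [sN.pi_apply]
  have h2 : sN.i.comp (a.hom.comp (b.hom.comp sN.p)) =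
      (sN.i.comp (a.hom.comp sM.p)).comp
        (sM.i.comp (b.hom.comp sN.p)) := by
    apply LinearMap.ext; intro x
    show sN.i (a (b (sN.p x))) = sN.i (a (sM.p (sM.i (b (sN.p x)))))
    rw [sM.pi_apply]
  rw [h1, h2, Tlam_cyclic lam hlam]

end Pairing

section Nondeg

/-- a linear map from a free module vanishing on the standard basis is zero -/
lemma eq_zero_of_single {a : ℕ} {V : Type u} [AddCommGroup V] [Module A V]
    (w : (Fin a → A) →ₗ[A] V) (h : ∀ j, w (Pi.single j 1) = 0) : w = 0 := by
  apply LinearMap.ext; intro x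
  have hx : x = ∑ j, x j • (Pi.single j 1 : Fin a → A) := by
    funext i'
    simp [Finset.sum_apply, Pi.single_apply, smul_eq_mul]
  rw [hx, map_sum]
  simp [h]

lemma recover {M N : ModuleCat.{u} A} (sM : Split M) (sN : Split N) (a : M ⟶ N) (x : M) :
    a x = sN.p ((sN.i.comp (a.hom.comp sM.p)) (sM.i x)) := by
  show a x = sN.p (sN.i (a (sM.p (sM.i x))))
  rw [sM.pi_apply, sN.pi_apply]

lemma tp_nondeg_left (hlam : ∀ a b : A, lam (a * b) = lam (b * a))
    (hnd : ∀ a : A, (∀ b : A, lam (a * b) = 0) → a = 0)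
    {M N : ModuleCat.{u} A} (sM : Split M) (sN : Split N) (a : M ⟶ N)
    (h : ∀ b : N ⟶ M, tp lam sM a b = 0) : a = 0 := by
  set U : (Fin sM.nn → A) →ₗ[A] (Fin sN.nn → A) :=
    sN.i.comp (a.hom.comp sM.p) with hU
  suffices hU0 : U = 0 by
    apply ModuleCat.hom_ext; apply LinearMap.ext; intro x
    rw [show a.hom x = a x from rfl, recover sM sN a x, ← hU, hU0]
    simp
  apply eq_zero_of_single
  intro j0
  funext i0
  have key : ∀ c : A, lam (U (Pi.single j0 1) i0 * c) = 0 := by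
    intro c
    rw [hlam]
    -- build the test morphism b
    set W : (Fin sN.nn → A) →ₗ[A] (Fin sM.nn → A) :=
      { toFun := fun x => Pi.single j0 (x i0 * c)
        map_add' := fun x y => by
          simp only [Pi.add_apply, add_mul, Pi.single_add]
        map_smul' := fun r x => by
          funext i
          simp [Pi.single_apply, Pi.smul_apply, smul_eq_mul, mul_ite, mul_assoc] } with hW
    set b : N ⟶ M := (ModuleCat.ofHom ((sM.p.comp W).comp sN.i)) with hb
    have hb0 := h b
    have hcomp : sM.i.comp ((b.hom).comp (a.hom.comp sM.p)) =
        ((sM.i.comp sM.p).comp W).comp U := rfl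
    have hcyc : tp lam sM a b = Tlam lam (U.comp (((sM.i.comp sM.p).comp W))) := by
      unfold tp
      rw [hcomp]
      exact Tlam_cyclic lam hlam U ((sM.i.comp sM.p).comp W)
    have hUE : U.comp (((sM.i.comp sM.p).comp W)) = U.comp W := by
      apply LinearMap.ext; intro x
      show U (sM.i (sM.p (W x))) = U (W x)
      show sN.i (a.hom (sM.p (sM.i (sM.p (W x))))) = U (W x)
      rw [sM.pi_apply]
      rfl
    rw [hcyc, hUE] at hb0
    -- now compute the trace
    unfold Tlam at hb0
    have hterm : ∀ j : Fin sN.nn, lam ((U.comp W) (Pi.single j 1) j) =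
        if j = i0 then lam (c * U (Pi.single j0 1) i0) else 0 := by
      intro j
      have hval : (U.comp W) (Pi.single j 1) =
          U (Pi.single j0 ((Pi.single j 1 : Fin sN.nn → A) i0 * c)) := rfl
      by_cases hj : j = i0
      · subst hj
        rw [if_pos rfl, hval, Pi.single_eq_same, one_mul]
        have h2 : (Pi.single j0 c : Fin sM.nn → A) = c • (Pi.single j0 1 : Fin sM.nn → A) := by
          funext i
          simp [Pi.single_apply, mul_ite]
        rw [h2, map_smul]
        rfl
      · rw [if_neg hj, hval, Pi.single_eq_of_ne (fun hh => hj hh.symm), zero_mul]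
        have : (Pi.single j0 (0:A) : Fin sM.nn → A) = 0 := Pi.single_zero j0
        rw [this, map_zero]
        simp
    rw [Finset.sum_congr rfl (fun j _ => hterm j)] at hb0
    rw [Finset.sum_ite_eq' Finset.univ i0 (fun _ => lam (c * U (Pi.single j0 1) i0))] at hb0
    simpa using hb0
  simpa using hnd _ key


lemma tp_nondeg_right (hlam : ∀ a b : A, lam (a * b) = lam (b * a))
    (hnd : ∀ a : A, (∀ b : A, lam (a * b) = 0) → a = 0)
    {M N : ModuleCat.{u} A} (sM : Split M) (sN : Split N) (b : N ⟶ M)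
    (h : ∀ a : M ⟶ N, tp lam sM a b = 0) : b = 0 := by
  apply tp_nondeg_left lam hlam hnd sN sM b
  intro a
  rw [tp_cyclic lam hlam sN sM b a]
  exact h a

end Nondeg

section FinDim

lemma findim_hom {M N : ModuleCat.{u} A} [FiniteDimensional k A] (sM : Split M) (sN : Split N) :
    FiniteDimensional k (M ⟶ N) := by
  let Φ : (M ⟶ N) →ₗ[k] (Fin sM.nn → Fin sN.nn → A) :=
    { toFun := fun a => fun j => sN.i (a (sM.p (Pi.single j 1)))
      map_add' := fun a a' => by
        funext j
        show sN.i ((a + a') (sM.p (Pi.single j 1))) = _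
        rw [show (a + a') (sM.p (Pi.single j 1)) = a (sM.p (Pi.single j 1)) +
          a' (sM.p (Pi.single j 1)) from rfl, map_add]
        rfl
      map_smul' := fun c a => by
        funext j
        show sN.i ((c • a) (sM.p (Pi.single j 1))) = _
        rw [show (c • a) (sM.p (Pi.single j 1)) =
          algebraMap k A c • a (sM.p (Pi.single j 1)) from rfl, map_smul, algebraMap_smul]
        rfl }
  have hΦ : Function.Injective Φ := by
    intro a a' haa
    have : ∀ j, sN.i (a (sM.p (Pi.single j 1))) = sN.i (a' (sM.p (Pi.single j 1))) :=
      fun j => congrFun haa j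
    have hz : (a.hom - a'.hom).comp sM.p = 0 := by
      refine eq_zero_of_single (V := (N : Type u)) _ (fun j => ?_)
      have h2 := congrArg sN.p (this j)
      rw [sN.pi_apply, sN.pi_apply] at h2
      show a (sM.p (Pi.single j 1)) - a' (sM.p (Pi.single j 1)) = 0
      rw [h2, sub_self]
    apply ModuleCat.hom_ext; apply LinearMap.ext; intro x
    have h3 := congrArg (fun f => f (sM.i x)) hz
    simp only [LinearMap.comp_apply, LinearMap.zero_apply, LinearMap.sub_apply] at h3
    rw [sM.pi_apply] at h3
    exact sub_eq_zero.mp h3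
  exact FiniteDimensional.of_injective Φ hΦ

end FinDim

section LinAlg

variable {V W : Type u} [AddCommGroup V] [Module k V] [AddCommGroup W] [Module k W]

lemma factor_through (D : V →ₗ[k] W) (F : V →ₗ[k] k)
    (hF : ∀ v, D v = 0 → F v = 0) : ∃ ξ : W →ₗ[k] k, F = ξ ∘ₗ D := by
  have hle : LinearMap.ker D ≤ LinearMap.ker F := fun v hv => hF v hv
  set Fbar := (LinearMap.ker D).liftQ F hle with hFbar
  set Dbar := (LinearMap.ker D).liftQ D le_rfl with hDbar
  have hDbarinj : LinearMap.ker Dbar = ⊥ := Submodule.ker_liftQ_eq_bot _ _ _ le_rfl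
  obtain ⟨r, hr⟩ := Dbar.exists_leftInverse_of_injective hDbarinj
  refine ⟨Fbar ∘ₗ r, ?_⟩
  apply LinearMap.ext; intro v
  have h1 : D v = Dbar ((LinearMap.ker D).mkQ v) := rfl
  have h2 : r (Dbar ((LinearMap.ker D).mkQ v)) = (LinearMap.ker D).mkQ v :=
    congrArg (fun f => f ((LinearMap.ker D).mkQ v)) hr
  show F v = Fbar (r (D v))
  rw [h1, h2]
  rfl

lemma pairing_surj [FiniteDimensional k V] [FiniteDimensional k W]
    (B : V →ₗ[k] W →ₗ[k] k)
    (h1 : ∀ v, B v = 0 → v = 0) (h2 : ∀ w, (∀ v, B v w = 0) → w = 0)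
    (ξ : W →ₗ[k] k) : ∃ v, B v = ξ := by
  have hBinj : Function.Injective B := by
    intro v v' hv
    have : B (v - v') = 0 := by rw [map_sub, hv, sub_self]
    have := h1 _ this
    rwa [sub_eq_zero] at this
  have hFlipinj : Function.Injective B.flip := by
    intro w w' hw
    have : B.flip (w - w') = 0 := by rw [map_sub, hw, sub_self]
    have h3 : ∀ v, B v (w - w') = 0 := fun v => congrArg (fun f => f v) this
    have := h2 _ h3
    rwa [sub_eq_zero] at this
  have hd1 : Module.finrank k V ≤ Module.finrank k (W →ₗ[k] k) :=
    LinearMap.finrank_le_finrank_of_injective hBinj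
  have hd2 : Module.finrank k W ≤ Module.finrank k (V →ₗ[k] k) :=
    LinearMap.finrank_le_finrank_of_injective hFlipinj
  have hdualV : Module.finrank k (V →ₗ[k] k) = Module.finrank k V :=
    Subspace.dual_finrank_eq
  have hdualW : Module.finrank k (W →ₗ[k] k) = Module.finrank k W :=
    Subspace.dual_finrank_eq
  have heq : Module.finrank k V = Module.finrank k (W →ₗ[k] k) := by omega
  have hsurj := (LinearMap.injective_iff_surjective_of_finrank_eq_finrank heq).mp hBinj
  exact hsurj ξ

end LinAlg

section ComplexLevel

open CochainComplex CochainComplex.HomComplex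

variable [FiniteDimensional k A]
variable (P Q : CochainComplex (ModuleCat.{u} A) ℤ)
variable (sP : ∀ m : ℤ, Split (P.X m)) (sQ : ∀ m : ℤ, Split (Q.X m))
variable (a b : ℤ)
variable (hPz : ∀ m : ℤ, m ∉ Finset.Icc a b → IsZero (P.X m))
variable (hQz : ∀ m : ℤ, m ∉ Finset.Icc a b → IsZero (Q.X m))

/-- sign -/
def epsk (m : ℤ) : k := ((m.negOnePow : ℤ) : k)

lemma epsk_pred (m : ℤ) : epsk (k := k) (m - 1) = - epsk (k := k) m := by
  have h : m - 1 + 1 = m := by omega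
  have := Int.negOnePow_succ (m - 1)
  rw [h] at this
  unfold epsk
  rw [this]
  push_cast
  ring

lemma epsk_ne_zero (m : ℤ) : epsk (k := k) m ≠ 0 := by
  unfold epsk
  rcases Int.units_eq_one_or m.negOnePow with h | h <;> rw [h] <;> simp

/-- the pairing of cochains -/
noncomputable def prC {n n' : ℤ} (hnn : n + n' = 0) (φ : Cochain P Q n) (ψ : Cochain Q P n') : k :=
  ∑ m ∈ Finset.Icc a b,
    epsk (k := k) m • tp lam (sP m) (φ.v m (m+n) rfl) (ψ.v (m+n) m (by omega))

variable {P Q}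

include hPz in
lemma vPQ_zero {n : ℤ} (φ : Cochain P Q n) (p q : ℤ) (hpq : p + n = q)
    (hp : p ∉ Finset.Icc a b) : φ.v p q hpq = 0 :=
  (hPz p hp).eq_of_src _ _

include hPz in
lemma vQP_zero {n : ℤ} (ψ : Cochain Q P n) (p q : ℤ) (hpq : p + n = q)
    (hq : q ∉ Finset.Icc a b) : ψ.v p q hpq = 0 :=
  (hPz q hq).eq_of_tgt _ _

lemma prC_add_left {n n' : ℤ} (hnn : n + n' = 0) (φ φ' : Cochain P Q n)
    (ψ : Cochain Q P n') :
    prC lam P Q sP a b hnn (φ + φ') ψ =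
      prC lam P Q sP a b hnn φ ψ + prC lam P Q sP a b hnn φ' ψ := by
  unfold prC
  rw [← Finset.sum_add_distrib]
  refine Finset.sum_congr rfl fun m _ => ?_
  rw [Cochain.add_v, tp_add_left, smul_add]

lemma prC_smul_left {n n' : ℤ} (hnn : n + n' = 0) (c : k) (φ : Cochain P Q n)
    (ψ : Cochain Q P n') :
    prC lam P Q sP a b hnn (c • φ) ψ = c • prC lam P Q sP a b hnn φ ψ := by
  unfold prC
  rw [Finset.smul_sum]
  refine Finset.sum_congr rfl fun m _ => ?_
  rw [Cochain.smul_v, tp_smul_left, smul_comm]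

lemma prC_add_right {n n' : ℤ} (hnn : n + n' = 0) (φ : Cochain P Q n)
    (ψ ψ' : Cochain Q P n') :
    prC lam P Q sP a b hnn φ (ψ + ψ') =
      prC lam P Q sP a b hnn φ ψ + prC lam P Q sP a b hnn φ ψ' := by
  unfold prC
  rw [← Finset.sum_add_distrib]
  refine Finset.sum_congr rfl fun m _ => ?_
  rw [Cochain.add_v, tp_add_right, smul_add]

lemma prC_smul_right {n n' : ℤ} (hnn : n + n' = 0) (c : k) (φ : Cochain P Q n)
    (ψ : Cochain Q P n') :
    prC lam P Q sP a b hnn φ (c • ψ) = c • prC lam P Q sP a b hnn φ ψ := by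
  unfold prC
  rw [Finset.smul_sum]
  refine Finset.sum_congr rfl fun m _ => ?_
  rw [Cochain.smul_v, tp_smul_right, smul_comm]


lemma tp_neg_right {M N : ModuleCat.{u} A} (sM : Split M) (x : M ⟶ N) (y : N ⟶ M) :
    tp lam sM x (-y) = - tp lam sM x y := by
  rw [show -y = (-1 : k) • y from (neg_one_smul k y).symm, tp_smul_right]
  simp

include hQz in
lemma vQPsrc_zero {n : ℤ} (ψ : Cochain Q P n) (p q : ℤ) (hpq : p + n = q)
    (hp : p ∉ Finset.Icc a b) : ψ.v p q hpq = 0 :=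
  (hQz p hp).eq_of_src _ _

lemma sum_shift_window {G : ℤ → k} (hG : ∀ m, m ∉ Finset.Icc (a+1) b → G m = 0) :
    ∑ m ∈ Finset.Icc a b, G (m+1) = ∑ m ∈ Finset.Icc a b, G m := by
  have h1 : ∑ m ∈ Finset.Icc a b, G (m+1) = ∑ m ∈ Finset.Icc (a+1) (b+1), G m := by
    rw [← Finset.map_add_right_Icc a b 1, Finset.sum_map]
    rfl
  rw [h1]
  rw [← Finset.sum_subset
    (show Finset.Icc (a+1) b ⊆ Finset.Icc (a+1) (b+1) from
      Finset.Icc_subset_Icc_right (by omega)) (fun x _ hnx => hG x hnx)]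
  rw [Finset.sum_subset
    (show Finset.Icc (a+1) b ⊆ Finset.Icc a b from
      Finset.Icc_subset_Icc_left (by omega)) (fun x _ hnx => hG x hnx)]

lemma epsk_succ (m : ℤ) : epsk (k := k) (m + 1) = - epsk (k := k) m := by
  unfold epsk
  rw [Int.negOnePow_succ]
  push_cast
  ring

/-- transport of the `S1` summand along index equalities -/
lemma S1_trans (w : Cochain P Q (-1)) (ψ : Cochain Q P 0) (K q1 q2 q1' q2' : ℤ)
    (h1 : K + (-1) = q1) (h2 : q1 + 0 = q2) (e1 : q1 = q1') (e2 : q2 = q2') :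
    tp lam (sP K) (w.v K q1 h1) (ψ.v q1 q2 h2 ≫ P.d q2 K) =
    tp lam (sP K) (w.v K q1' (by omega)) (ψ.v q1' q2' (by omega) ≫ P.d q2' K) := by
  subst e1; subst e2; rfl

include hPz hQz in
lemma prC_adj (hlam : ∀ a b : A, lam (a * b) = lam (b * a))
    (w : Cochain P Q (-1)) (ψ : Cochain Q P 0) :
    prC lam P Q sP a b (show (0:ℤ) + 0 = 0 by ring) (δ (-1) 0 w) ψ =
      - prC lam P Q sP a b (show (-1:ℤ) + 1 = 0 by ring) w (δ 0 1 ψ) := by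
  unfold prC
  have expandL : ∀ m ∈ Finset.Icc a b,
      epsk (k := k) m • tp lam (sP m) ((δ (-1) 0 w).v m (m+0) rfl)
          (ψ.v (m+0) m (by omega)) =
      (epsk (k := k) m • tp lam (sP m) (w.v m (m+(-1)) rfl)
          (Q.d (m+(-1)) (m+0) ≫ ψ.v (m+0) m (by omega)))
      + (epsk (k := k) m • tp lam (sP (m+1)) (w.v (m+1) (m+0) (by omega))
          (ψ.v (m+0) m (by omega) ≫ P.d m (m+1))) := by
    intro m _
    rw [δ_v (-1) 0 (by ring) w m (m+0) rfl (m+(-1)) (m+1) (by omega) rfl]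
    rw [Int.negOnePow_zero, one_smul, tp_add_left, tp_assoc]
    rw [tp_assoc lam (sP m) (P.d m (m+1)) (w.v (m+1) (m+0) (by omega)) (ψ.v (m+0) m (by omega))]
    rw [tp_cyclic lam hlam (sP m) (sP (m+1))]
    rw [tp_assoc]
    rw [smul_add]
  rw [Finset.sum_congr rfl expandL, Finset.sum_add_distrib]
  have expandR : ∀ m ∈ Finset.Icc a b,
      epsk (k := k) m • tp lam (sP m) (w.v m (m+(-1)) rfl)
          ((δ 0 1 ψ).v (m+(-1)) m (by omega)) =
      (epsk (k := k) m • tp lam (sP m) (w.v m (m+(-1)) rfl)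
          (ψ.v (m+(-1)) (m+(-1)+0) rfl ≫ P.d (m+(-1)+0) m))
      - (epsk (k := k) m • tp lam (sP m) (w.v m (m+(-1)) rfl)
          (Q.d (m+(-1)) (m+0) ≫ ψ.v (m+0) m (by omega))) := by
    intro m _
    rw [δ_v 0 1 rfl ψ (m+(-1)) m (by omega) (m+(-1)+0) (m+0) (by omega) (by omega)]
    rw [Int.negOnePow_one, Units.neg_smul, one_smul, tp_add_right, tp_neg_right,
      smul_add, smul_neg]
    ring
  rw [Finset.sum_congr rfl expandR]
  rw [Finset.sum_sub_distrib]
  set S1 : ℤ → k := fun K => epsk (k := k) K • tp lam (sP K) (w.v K (K+(-1)) rfl)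
    (ψ.v (K+(-1)) (K+(-1)+0) rfl ≫ P.d (K+(-1)+0) K) with hS1
  have hsupp : ∀ m, m ∉ Finset.Icc (a+1) b → S1 m = 0 := by
    intro m hm
    rw [hS1]
    dsimp only
    by_cases hm2 : m ∈ Finset.Icc a b
    · have hm3 : (m + (-1)) ∉ Finset.Icc a b := by
        simp only [Finset.mem_Icc] at *
        omega
      rw [vQPsrc_zero a b hQz ψ (m+(-1)) (m+(-1)+0) rfl hm3]
      rw [zero_comp, tp_zero_right, smul_zero]
    · rw [vPQ_zero a b hPz w m (m+(-1)) rfl hm2, tp_zero_left, smul_zero]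
  have key : ∑ m ∈ Finset.Icc a b,
      epsk (k := k) m • tp lam (sP (m+1)) (w.v (m+1) (m+0) (by omega))
        (ψ.v (m+0) m (by omega) ≫ P.d m (m+1)) =
      - ∑ m ∈ Finset.Icc a b, S1 m := by
    rw [← sum_shift_window a b hsupp, ← Finset.sum_neg_distrib]
    refine Finset.sum_congr rfl fun m _ => ?_
    rw [hS1]
    dsimp only
    rw [S1_trans lam sP w ψ (m+1) ((m+1)+(-1)) ((m+1)+(-1)+0) (m+0) m
      rfl rfl (by omega) (by omega)]
    rw [epsk_succ, neg_smul, neg_neg]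
  rw [key]
  abel


/-- transporting vanishing of a cochain component along index equalities -/
lemma v_zero_congr {F G : CochainComplex (ModuleCat.{u} A) ℤ} {n : ℤ} (φ : Cochain F G n)
    (p p' q q' : ℤ) (h : p + n = q) (h' : p' + n = q') (hp : p' = p) (hq : q' = q)
    (hz : φ.v p q h = 0) : φ.v p' q' h' = 0 := by
  subst hp; subst hq; exact hz

include hPz sQ in
lemma prC_nondeg_left (hlam : ∀ a b : A, lam (a * b) = lam (b * a))
    (hnd : ∀ a : A, (∀ b : A, lam (a * b) = 0) → a = 0)
    {n n' : ℤ} (hnn : n + n' = 0) (φ : Cochain P Q n)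
    (h : ∀ ψ : Cochain Q P n', prC lam P Q sP a b hnn φ ψ = 0) : φ = 0 := by
  apply Cochain.ext
  intro p q hpq
  rw [Cochain.zero_v]
  subst hpq
  by_cases hp : p ∈ Finset.Icc a b
  · refine tp_nondeg_left lam hlam hnd (sP p) (sQ (p+n)) _ (fun g => ?_)
    set ψg : Cochain Q P n' := Cochain.mk (fun r r' hr =>
      if hrp : r = p + n ∧ r' = p then
        (eqToHom (by rw [hrp.1]) : Q.X r ⟶ Q.X (p+n)) ≫ g ≫
          (eqToHom (by rw [hrp.2]) : P.X p ⟶ P.X r') else 0) with hψg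
    have h3 := h ψg
    unfold prC at h3
    rw [Finset.sum_eq_single p (fun m _ hmp => ?side) (fun hnp => absurd hp hnp)] at h3
    · have h4 : ψg.v (p+n) p (by omega) = g := by
        rw [hψg, Cochain.mk_v, dif_pos ⟨rfl, rfl⟩, eqToHom_refl, eqToHom_refl,
          Category.id_comp, Category.comp_id]
      rw [h4] at h3
      have h5 := smul_eq_zero.mp h3
      rcases h5 with h5 | h5
      · exact absurd h5 (epsk_ne_zero p)
      · exact h5
    · have h6 : ψg.v (m+n) m (by omega) = 0 := by
        rw [hψg, Cochain.mk_v, dif_neg (fun hc => hmp hc.2)]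
      rw [h6, tp_zero_right, smul_zero]
  · exact vPQ_zero a b hPz φ p (p+n) rfl hp

include hPz hQz sQ in
lemma prC_nondeg_right (hlam : ∀ a b : A, lam (a * b) = lam (b * a))
    (hnd : ∀ a : A, (∀ b : A, lam (a * b) = 0) → a = 0)
    {n n' : ℤ} (hnn : n + n' = 0) (ψ : Cochain Q P n')
    (h : ∀ φ : Cochain P Q n, prC lam P Q sP a b hnn φ ψ = 0) : ψ = 0 := by
  apply Cochain.ext
  intro p q hpq
  rw [Cochain.zero_v]
  subst hpq
  by_cases hq : p + n' ∈ Finset.Icc a b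
  · -- the canonical component at m := p + n'
    have main : ψ.v ((p+n')+n) (p+n') (by omega) = 0 := by
      refine tp_nondeg_right lam hlam hnd (sP (p+n')) (sQ ((p+n')+n)) _ (fun g => ?_)
      set φg : Cochain P Q n := Cochain.mk (fun r r' hr =>
        if hrp : r = p + n' ∧ r' = (p+n')+n then
          (eqToHom (by rw [hrp.1]) : P.X r ⟶ P.X (p+n')) ≫ g ≫
            (eqToHom (by rw [hrp.2]) : Q.X ((p+n')+n) ⟶ Q.X r') else 0) with hφg
      have h3 := h φg
      unfold prC at h3
      rw [Finset.sum_eq_single (p+n') (fun m _ hmp => ?side) (fun hnp => absurd hq hnp)] at h3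
      · have h4 : φg.v (p+n') ((p+n')+n) rfl = g := by
          rw [hφg, Cochain.mk_v, dif_pos ⟨rfl, rfl⟩, eqToHom_refl, eqToHom_refl,
            Category.id_comp, Category.comp_id]
        rw [h4] at h3
        rcases smul_eq_zero.mp h3 with h5 | h5
        · exact absurd h5 (epsk_ne_zero _)
        · exact h5
      · have h6 : φg.v m (m+n) rfl = 0 := by
          rw [hφg, Cochain.mk_v, dif_neg (fun hc => hmp hc.1)]
        rw [h6, tp_zero_left, smul_zero]
    exact v_zero_congr ψ ((p+n')+n) p (p+n') (p+n') (by omega) rfl (by omega) rfl main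
  · exact vQP_zero a b hPz ψ p (p+n') rfl hq

include hPz sP sQ in
lemma findim_cochain (n : ℤ) : FiniteDimensional k (Cochain P Q n) := by
  haveI : ∀ m : ↥(Finset.Icc a b), FiniteDimensional k (P.X (m : ℤ) ⟶ Q.X ((m : ℤ)+n)) :=
    fun m => findim_hom (sP (m : ℤ)) (sQ ((m : ℤ)+n))
  haveI : FiniteDimensional k ((m : ↥(Finset.Icc a b)) → (P.X (m : ℤ) ⟶ Q.X ((m : ℤ)+n))) :=
    inferInstance
  set Φ : Cochain P Q n →ₗ[k] ((m : ↥(Finset.Icc a b)) → (P.X (m : ℤ) ⟶ Q.X ((m : ℤ)+n))) :=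
    { toFun := fun φ m => φ.v (m : ℤ) ((m : ℤ)+n) rfl
      map_add' := fun φ φ' => rfl
      map_smul' := fun c φ => rfl } with hΦ
  have hinj : Function.Injective Φ := by
    intro φ φ' hfe
    apply Cochain.ext
    intro p q hpq
    subst hpq
    by_cases hp : p ∈ Finset.Icc a b
    · exact congrFun hfe ⟨p, hp⟩
    · rw [vPQ_zero a b hPz φ p (p+n) rfl hp, vPQ_zero a b hPz φ' p (p+n) rfl hp]
  exact FiniteDimensional.of_injective Φ hinj


lemma tp_eq_of_comp_eq {M N N' : ModuleCat.{u} A} (s : Split M) (x : M ⟶ N) (y : N ⟶ M)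
    (x' : M ⟶ N') (y' : N' ⟶ M) (h : x ≫ y = x' ≫ y') :
    tp lam s x y = tp lam s x' y' := by
  unfold tp
  congr 1
  apply LinearMap.ext; intro x0
  show s.i (y (x (s.p x0))) = s.i (y' (x' (s.p x0)))
  have h2 := congrArg (fun (f : M ⟶ M) => f (s.p x0)) h
  exact congrArg s.i h2

lemma component_eq (α : P ⟶ Q) (β : Q ⟶ P) (m q : ℤ) (hq : m + 0 = q) :
    tp lam (sP m) ((Cochain.ofHom α).v m q hq) ((Cochain.ofHom β).v q m (by omega)) =
    tp lam (sP m) ((Cochain.ofHom (α ≫ β)).v m q hq)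
      ((Cochain.ofHom (𝟙 P)).v q m (by omega)) := by
  have hqm : q = m := by omega
  subst hqm
  rw [Cochain.ofHom_v, Cochain.ofHom_v, Cochain.ofHom_v, Cochain.ofHom_v]
  apply tp_eq_of_comp_eq
  simp

lemma prC_zero_right {n n' : ℤ} (hnn : n + n' = 0) (φ : Cochain P Q n) :
    prC lam P Q sP a b hnn φ (0 : Cochain Q P n') = 0 := by
  unfold prC
  refine Finset.sum_eq_zero fun m _ => ?_
  rw [Cochain.zero_v, tp_zero_right, smul_zero]

include hPz hQz sQ in
lemma prC_ofHom_zero_of_homotopy (hlam : ∀ a b : A, lam (a * b) = lam (b * a))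
    {α : P ⟶ Q} {β : Q ⟶ P} (e : Homotopy (α ≫ β) 0) :
    prC lam P Q sP a b (add_zero 0) (Cochain.ofHom α) (Cochain.ofHom β) = 0 := by
  obtain ⟨z, hz⟩ := (Cochain.equivHomotopy _ _) e
  rw [Cochain.ofHom_zero, add_zero] at hz
  have step1 : prC lam P Q sP a b (add_zero 0) (Cochain.ofHom α) (Cochain.ofHom β)
      = prC lam P P sP a b (add_zero 0) (δ (-1) 0 z) (Cochain.ofHom (𝟙 P)) := by
    unfold prC
    refine Finset.sum_congr rfl fun m _ => ?_
    congr 1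
    rw [component_eq lam sP α β m (m+0) rfl, hz]
  rw [step1, prC_adj lam sP a b hPz hPz hlam z (Cochain.ofHom (𝟙 P)),
    δ_ofHom, prC_zero_right, neg_zero]

include hPz hQz sP sQ in
lemma key_homotopy (hlam : ∀ a b : A, lam (a * b) = lam (b * a))
    (hnd : ∀ a : A, (∀ b : A, lam (a * b) = 0) → a = 0) (α : P ⟶ Q)
    (hα : ∀ β : Q ⟶ P, prC lam P Q sP a b (add_zero 0)
      (Cochain.ofHom α) (Cochain.ofHom β) = 0) :
    Nonempty (Homotopy α 0) := by
  haveI fd1 : FiniteDimensional k (Cochain P Q (-1)) := findim_cochain sP sQ a b hPz (-1)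
  haveI fd2 : FiniteDimensional k (Cochain Q P 1) :=
    findim_cochain (P := Q) (Q := P) sQ sP a b hQz 1
  set F : Cochain Q P 0 →ₗ[k] k :=
    { toFun := fun ψ => prC lam P Q sP a b (add_zero 0) (Cochain.ofHom α) ψ
      map_add' := fun ψ ψ' => prC_add_right lam sP a b (add_zero 0) _ ψ ψ'
      map_smul' := fun c ψ => prC_smul_right lam sP a b (add_zero 0) c _ ψ } with hF
  set D' : Cochain Q P 0 →ₗ[k] Cochain Q P 1 := δ_hom (F := Q) (G := P) (R := k) 0 1 with hD'
  have hF0 : ∀ ψ, D' ψ = 0 → F ψ = 0 := by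
    intro ψ hψ
    have hψ' : δ 0 1 ψ = 0 := hψ
    set β : Q ⟶ P := Cocycle.homOf (Cocycle.mk ψ 1 (zero_add 1) hψ') with hβ
    have hofhom : Cochain.ofHom β = ψ := by
      rw [hβ, Cocycle.cochain_ofHom_homOf_eq_coe]
      rfl
    show prC lam P Q sP a b (add_zero 0) (Cochain.ofHom α) ψ = 0
    rw [← hofhom]
    exact hα β
  obtain ⟨ξ, hξ⟩ := factor_through D' F hF0
  set B : Cochain P Q (-1) →ₗ[k] (Cochain Q P 1 →ₗ[k] k) :=
    { toFun := fun w =>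
        { toFun := fun χ => prC lam P Q sP a b (neg_add_cancel 1) w χ
          map_add' := fun χ χ' => prC_add_right lam sP a b (neg_add_cancel 1) w χ χ'
          map_smul' := fun c χ => prC_smul_right lam sP a b (neg_add_cancel 1) c w χ }
      map_add' := fun w w' => LinearMap.ext fun χ =>
        prC_add_left lam sP a b (neg_add_cancel 1) w w' χ
      map_smul' := fun c w => LinearMap.ext fun χ =>
        prC_smul_left lam sP a b (neg_add_cancel 1) c w χ } with hB
  have h1 : ∀ w, B w = 0 → w = 0 := fun w hw =>
    prC_nondeg_left lam sP sQ a b hPz hlam hnd (neg_add_cancel 1) w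
      (fun χ => congrArg (fun f => f χ) hw)
  have h2 : ∀ χ, (∀ w, B w χ = 0) → χ = 0 := fun χ hχ =>
    prC_nondeg_right lam sP sQ a b hPz hQz hlam hnd (neg_add_cancel 1) χ hχ
  obtain ⟨w, hw⟩ := pairing_surj B h1 h2 ξ
  have hall : ∀ ψ : Cochain Q P 0,
      prC lam P Q sP a b (add_zero 0) (Cochain.ofHom α + δ (-1) 0 w) ψ = 0 := by
    intro ψ
    rw [prC_add_left]
    have e1 : prC lam P Q sP a b (add_zero 0) (Cochain.ofHom α) ψ = F ψ := rfl
    have e2 : F ψ = ξ (D' ψ) := by rw [hξ]; rfl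
    have e3 : ξ (D' ψ) = B w (D' ψ) := by rw [hw]
    have e4 : B w (D' ψ) = prC lam P Q sP a b (neg_add_cancel 1) w (δ 0 1 ψ) := rfl
    have e5 := prC_adj lam sP a b hPz hQz hlam w ψ
    rw [e1, e2, e3, e4]
    have e6 : prC lam P Q sP a b (add_zero 0) (δ (-1) 0 w) ψ =
        - prC lam P Q sP a b (neg_add_cancel 1) w (δ 0 1 ψ) := e5
    rw [e6]
    ring
  have hzero : Cochain.ofHom α + δ (-1) 0 w = 0 :=
    prC_nondeg_left lam sP sQ a b hPz hlam hnd (add_zero 0) _ hall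
  refine ⟨(Cochain.equivHomotopy α 0).symm ⟨-w, ?_⟩⟩
  rw [Cochain.ofHom_zero, add_zero, δ_neg]
  exact eq_neg_of_add_eq_zero_left hzero

end ComplexLevel


end ModLevel
end Statement11Aux

open ForPaper Pretriangulated

/-- The quotient functor from complexes to `K(Mod A)`. -/
noncomputable abbrev Kq (A : Type u) [Ring A] :
    CochainComplex (ModuleCat.{u} A) ℤ ⥤
      HomotopyCategory (ModuleCat.{u} A) (ComplexShape.up ℤ) :=
  HomotopyCategory.quotient _ _


namespace Statement11Aux

open ForPaper

variable {A : Type u} [Ring A]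

lemma isPerfect_shift (X : CochainComplex (ModuleCat.{u} A) ℤ) (hX : IsPerfect X) (n : ℤ) :
    IsPerfect (X⟦n⟧) := by
  constructor
  · intro m
    exact hX.1 (m + n)
  · obtain ⟨a, b, hab⟩ := hX.2
    exact ⟨a - n, b - n, fun m hm => hab (m + n) (by omega)⟩

/-- splittings of the components of a perfect complex -/
noncomputable def splitsOf (X : CochainComplex (ModuleCat.{u} A) ℤ) (hX : IsPerfect X) :
    ∀ m : ℤ, Split (X.X m) :=
  fun m => splitOf (X.X m) (hX.1 m).1 (hX.1 m).2

end Statement11Aux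

open Statement11Aux

/-- Over a finite-dimensional symmetric algebra, given a distinguished triangle
`X ⟶ M' ⟶ Y ⟶ X⟦1⟧` in `K^b(proj A)`, if every map `X ⟶ M⟦i⟧` factors through `f`
then every map `M⟦i⟧ ⟶ Y` factors through `g`. -/
theorem statement_11 (k : Type u) [Field k] (A : Type u) [Ring A] [Algebra k A]
    [FiniteDimensional k A] (hA : IsSymmetricAlgebra k A)
    (X M' Y M : CochainComplex (ModuleCat.{u} A) ℤ)
    (hX : IsPerfect X) (hM' : IsPerfect M') (hY : IsPerfect Y) (hM : IsPerfect M)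
    (f : (Kq A).obj X ⟶ (Kq A).obj M') (g : (Kq A).obj M' ⟶ (Kq A).obj Y)
    (h : (Kq A).obj Y ⟶ ((Kq A).obj X)⟦(1 : ℤ)⟧)
    (hdist : Triangle.mk f g h ∈
      distTriang (HomotopyCategory (ModuleCat.{u} A) (ComplexShape.up ℤ)))
    (ha : ∀ (i : ℤ) (u : (Kq A).obj X ⟶ (Kq A).obj (M⟦i⟧)),
      ∃ v : (Kq A).obj M' ⟶ (Kq A).obj (M⟦i⟧), u = f ≫ v) :
    ∀ (i : ℤ) (v : (Kq A).obj (M⟦i⟧) ⟶ (Kq A).obj Y),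
      ∃ w : (Kq A).obj (M⟦i⟧) ⟶ (Kq A).obj M', v = w ≫ g := by
  classical
  obtain ⟨lam, hlam, hnd⟩ := hA
  intro i v
  suffices hvh : v ≫ h = 0 by
    obtain ⟨w, hw⟩ := Pretriangulated.Triangle.coyoneda_exact₃ (Triangle.mk f g h) hdist v hvh
    exact ⟨w, hw⟩
  have hMi : IsPerfect (M⟦i⟧) := isPerfect_shift M hM i
  have hX1 : IsPerfect (X⟦(1:ℤ)⟧) := isPerfect_shift X hX 1
  let e1 := ((Kq A).commShiftIso (1:ℤ)).app X
  -- every map from the shifted X to shifted M kills h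
  have hγ : ∀ γ : ((Kq A).obj X)⟦(1:ℤ)⟧ ⟶ (Kq A).obj (M⟦i⟧), h ≫ γ = 0 := by
    intro γ
    set K' := HomotopyCategory (ModuleCat.{u} A) (ComplexShape.up ℤ)
    let S := CategoryTheory.shiftFunctor K' (1:ℤ)
    let S' := CategoryTheory.shiftFunctor K' (-1:ℤ)
    let η := CategoryTheory.shiftFunctorCompIsoId K' (1:ℤ) (-1:ℤ) (by ring)
    apply S'.map_injective
    rw [CategoryTheory.Functor.map_comp, CategoryTheory.Functor.map_zero]
    set u0 : (Kq A).obj X ⟶ ((Kq A).obj (M⟦i⟧))⟦(-1:ℤ)⟧ :=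
      η.inv.app ((Kq A).obj X) ≫ S'.map γ with hu0
    have hrec : S'.map γ = η.hom.app ((Kq A).obj X) ≫ u0 := by
      rw [hu0, Iso.hom_inv_id_app_assoc]
    let c1 := ((Kq A).commShiftIso (-1:ℤ)).app (M⟦i⟧)
    let c2 : ((M⟦i⟧)⟦(-1:ℤ)⟧ : CochainComplex (ModuleCat.{u} A) ℤ) ≅ M⟦i + -1⟧ :=
      ((shiftFunctorAdd' (CochainComplex (ModuleCat.{u} A) ℤ) i (-1) (i + -1) rfl).app M).symm
    obtain ⟨vv, hvv⟩ := ha (i + -1) (u0 ≫ c1.inv ≫ (Kq A).map c2.hom)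
    have hu0' : u0 = f ≫ vv ≫ (Kq A).map c2.inv ≫ c1.hom := by
      have h2 : (u0 ≫ c1.inv ≫ (Kq A).map c2.hom) ≫ (Kq A).map c2.inv ≫ c1.hom =
          f ≫ vv ≫ (Kq A).map c2.inv ≫ c1.hom := by
        rw [hvv]; simp only [Category.assoc]
      have hcc : (Kq A).map c2.hom ≫ (Kq A).map c2.inv ≫ c1.hom = c1.hom := by
        rw [← Category.assoc, ← CategoryTheory.Functor.map_comp, Iso.hom_inv_id, CategoryTheory.Functor.map_id,
          Category.id_comp]
      calc u0 = (u0 ≫ c1.inv ≫ (Kq A).map c2.hom) ≫ (Kq A).map c2.inv ≫ c1.hom := by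
            simp only [Category.assoc]
            rw [hcc, Iso.inv_hom_id, Category.comp_id]
        _ = f ≫ vv ≫ (Kq A).map c2.inv ≫ c1.hom := h2
    have hnat : η.hom.app ((Kq A).obj X) ≫ f =
        S'.map (S.map f) ≫ η.hom.app ((Kq A).obj M') := by
      have h3 := η.hom.naturality f
      simpa using h3.symm
    have hz : h ≫ S.map f = 0 :=
      Pretriangulated.comp_distTriang_mor_zero₃₁ (Triangle.mk f g h) hdist
    rw [hrec, hu0']
    calc S'.map h ≫ η.hom.app ((Kq A).obj X) ≫ f ≫ vv ≫ (Kq A).map c2.inv ≫ c1.hom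
        = S'.map h ≫ (η.hom.app ((Kq A).obj X) ≫ f) ≫ vv ≫ (Kq A).map c2.inv ≫ c1.hom := by
          simp only [Category.assoc]
      _ = S'.map h ≫ (S'.map (S.map f) ≫ η.hom.app ((Kq A).obj M')) ≫
            vv ≫ (Kq A).map c2.inv ≫ c1.hom := by rw [hnat]
      _ = S'.map (h ≫ S.map f) ≫ η.hom.app ((Kq A).obj M') ≫
            vv ≫ (Kq A).map c2.inv ≫ c1.hom := by
          simp only [CategoryTheory.Functor.map_comp, Category.assoc]
      _ = 0 := by rw [hz, CategoryTheory.Functor.map_zero, zero_comp]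
  -- pass to a chain-level representative
  set α0 : (Kq A).obj (M⟦i⟧) ⟶ (Kq A).obj (X⟦(1:ℤ)⟧) := v ≫ h ≫ e1.inv with hα0
  obtain ⟨αc, hαc⟩ := (Kq A).map_surjective α0
  obtain ⟨aM, bM, hMw⟩ := hMi.2
  obtain ⟨aX, bX, hXw⟩ := hX1.2
  have hPz : ∀ m : ℤ, m ∉ Finset.Icc (min aM aX) (max bM bX) → IsZero ((M⟦i⟧).X m) := by
    intro m hm
    simp only [Finset.mem_Icc] at hm
    exact hMw m (by omega)
  have hQz : ∀ m : ℤ, m ∉ Finset.Icc (min aM aX) (max bM bX) → IsZero ((X⟦(1:ℤ)⟧).X m) := by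
    intro m hm
    simp only [Finset.mem_Icc] at hm
    exact hXw m (by omega)
  have hkey : Nonempty (Homotopy αc 0) := by
    apply key_homotopy lam (splitsOf (M⟦i⟧) hMi) (splitsOf (X⟦(1:ℤ)⟧) hX1)
      (min aM aX) (max bM bX) hPz hQz hlam hnd αc
    intro β
    apply prC_ofHom_zero_of_homotopy lam (splitsOf (M⟦i⟧) hMi) (splitsOf (X⟦(1:ℤ)⟧) hX1)
      (min aM aX) (max bM bX) hPz hQz hlam
    apply HomotopyCategory.homotopyOfEq
    rw [CategoryTheory.Functor.map_comp, hαc, CategoryTheory.Functor.map_zero, hα0]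
    have h4 := hγ (e1.inv ≫ (Kq A).map β)
    calc (v ≫ h ≫ e1.inv) ≫ (Kq A).map β
        = v ≫ (h ≫ (e1.inv ≫ (Kq A).map β)) := by simp only [Category.assoc]
      _ = 0 := by rw [h4, comp_zero]
  obtain ⟨ho⟩ := hkey
  have hmap0 : α0 = 0 := by
    rw [← hαc]
    have h5 := HomotopyCategory.eq_of_homotopy _ _ ho
    rw [CategoryTheory.Functor.map_zero] at h5
    exact h5
  have h6 : v ≫ h = α0 ≫ e1.hom := by
    rw [hα0]
    simp
  rw [h6, hmap0, zero_comp]
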